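/- Let r > 1 and let f be holomorphic on the annulus 𝔸_r with Laurent expansion f(z) = Σ_{n ∈ ℤ} a_n zⁿ (summable for each z ∈ 𝔸_r). Then for every z ∈ 𝔸_r for which Σ_{n ∈ ℤ} |z|^{2n}/I_n(r) converges, one has |f(z)| ≤ (1/√(2π)) · (∬_{𝔸_r} (1 − |w|²)² |f(w)|² dA(w))^{1/2} · (Σ_{n ∈ ℤ} |z|^{2n}/I_n(r))^{1/2}. -/

import Mathlib

set_option maxHeartbeats 1000000

open MeasureTheory Complex Metric

/-- The annulus `𝔸_r = {z : 1 < |z| < r}`. -/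
def annulus (r : ℝ) : Set ℂ := {z : ℂ | 1 < ‖z‖ ∧ ‖z‖ < r}

/-- `I_n(r) = (1/2) ∫_1^{r²} ρⁿ (1-ρ)² dρ`. -/
noncomputable def laurentI (n : ℤ) (r : ℝ) : ℝ :=
  (1 / 2) * ∫ ρ in (1:ℝ)..(r ^ 2), ρ ^ n * (1 - ρ) ^ 2

open Set Filter Topology
open scoped Real

noncomputable section
namespace Stmt1Aux

/-- closed annulus -/
def K (t s : ℝ) : Set ℂ := {w : ℂ | t ≤ ‖w‖ ∧ ‖w‖ ≤ s}

def Iaux (n : ℤ) (t s : ℝ) : ℝ := (1/2) * ∫ ρ in (t^2)..(s^2), ρ ^ n * (1 - ρ) ^ 2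

lemma isClosed_K (t s : ℝ) : IsClosed (K t s) :=
  (isClosed_le continuous_const continuous_norm).inter (isClosed_le continuous_norm continuous_const)

lemma isCompact_K (t s : ℝ) : IsCompact (K t s) := by
  refine Metric.isCompact_of_isClosed_isBounded (isClosed_K t s) ?_
  refine (Metric.isBounded_iff_subset_closedBall 0).2 ⟨s, fun w hw => ?_⟩
  simpa [Metric.mem_closedBall] using hw.2

lemma measurableSet_K (t s : ℝ) : MeasurableSet (K t s) := (isClosed_K t s).measurableSet

lemma integral_theta (k : ℤ) :
    ∫ θ in Ioo (-π) π, Complex.exp ((k : ℂ) * (θ : ℂ) * Complex.I) =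
      if k = 0 then ((2 * π : ℝ) : ℂ) else 0 := by
  have hle : -π ≤ π := by linarith [Real.pi_pos]
  rw [← integral_Ioc_eq_integral_Ioo, ← intervalIntegral.integral_of_le hle]
  rcases eq_or_ne k 0 with hk | hk
  · subst hk
    simp only [Int.cast_zero, zero_mul, Complex.exp_zero, if_pos]
    rw [intervalIntegral.integral_const]
    simp [Complex.real_smul]
    skip
    ring
  · rw [if_neg hk]
    have hc : (k : ℂ) * Complex.I ≠ 0 :=
      mul_ne_zero (Int.cast_ne_zero.2 hk) Complex.I_ne_zero
    have h := integral_exp_mul_complex (a := -π) (b := π) hc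
    simp only [show ∀ θ : ℝ, (k : ℂ) * Complex.I * (θ : ℂ) = (k : ℂ) * (θ : ℂ) * Complex.I by
      intro θ; ring] at h
    rw [h]
    have hsq : ((-1 : ℂ)) ^ k * ((-1 : ℂ)) ^ k = 1 := by
      rw [← mul_zpow]; norm_num
    have h1 : Complex.exp ((k : ℂ) * ((π : ℝ) : ℂ) * Complex.I) = (-1 : ℂ) ^ k := by
      rw [show (k : ℂ) * ((π : ℝ) : ℂ) * Complex.I = (k : ℤ) * ((π : ℂ) * Complex.I) by
        push_cast; ring, Complex.exp_int_mul, Complex.exp_pi_mul_I]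
    have h2 : Complex.exp ((k : ℂ) * ((-π : ℝ) : ℂ) * Complex.I) = (-1 : ℂ) ^ k := by
      rw [show (k : ℂ) * ((-π : ℝ) : ℂ) * Complex.I = (-k : ℤ) * ((π : ℂ) * Complex.I) by
        push_cast; ring, Complex.exp_int_mul, Complex.exp_pi_mul_I, zpow_neg]
      exact (eq_inv_of_mul_eq_one_left hsq).symm
    rw [h1, h2, sub_self, zero_div]

lemma integral_radial (n : ℤ) {t s : ℝ} (ht : 0 < t) (hts : t ≤ s) :
    ∫ ρ in Ioo t s, ρ ^ (n + n) * ρ * (1 - ρ ^ 2) ^ 2 = Iaux n t s := by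
  have key : (∫ x in t..s, (2 * x) • ((fun u : ℝ => u ^ n * (1 - u) ^ 2) ((fun x : ℝ => x ^ 2) x)))
      = ∫ u in (t^2)..(s^2), u ^ n * (1 - u) ^ 2 := by
    refine intervalIntegral.integral_comp_smul_deriv' (f := fun x : ℝ => x ^ 2)
      (f' := fun x : ℝ => 2 * x) (g := fun u : ℝ => u ^ n * (1 - u) ^ 2) ?_ ?_ ?_
    · intro x _
      simpa using (hasDerivAt_pow 2 x)
    · exact (continuous_const.mul continuous_id).continuousOn
    · have himg : (fun x : ℝ => x ^ 2) '' (uIcc t s) ⊆ {u : ℝ | u ≠ 0} := by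
        rintro u ⟨x, hx, rfl⟩
        rw [uIcc_of_le hts] at hx
        have hx0 : 0 < x := lt_of_lt_of_le ht hx.1
        simp [pow_eq_zero_iff, hx0.ne']
      refine ContinuousOn.mono ?_ himg
      refine ContinuousOn.mul ?_ (by fun_prop)
      intro u hu
      exact (continuousAt_zpow₀ _ _ (Or.inl hu)).continuousWithinAt
  have hpt : ∀ ρ ∈ Ioo t s, ρ ^ (n + n) * ρ * (1 - ρ ^ 2) ^ 2
      = (1/2 : ℝ) * ((2 * ρ) • ((ρ ^ 2 : ℝ) ^ n * (1 - ρ ^ 2) ^ 2)) := by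
    intro ρ hρ
    have hρ0 : (ρ : ℝ) ≠ 0 := (lt_of_lt_of_le ht hρ.1.le).ne'
    have h2 : ((ρ ^ 2 : ℝ)) ^ n = ρ ^ (n + n) := by
      rw [← zpow_natCast ρ 2, ← zpow_mul]
      norm_num [two_mul]
    rw [h2, smul_eq_mul]
    ring
  calc ∫ ρ in Ioo t s, ρ ^ (n + n) * ρ * (1 - ρ ^ 2) ^ 2
      = ∫ ρ in Ioo t s, (1/2 : ℝ) * ((2 * ρ) • ((ρ ^ 2 : ℝ) ^ n * (1 - ρ ^ 2) ^ 2)) :=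
        setIntegral_congr_fun measurableSet_Ioo hpt
    _ = (1/2 : ℝ) * ∫ ρ in Ioo t s, (2 * ρ) • ((ρ ^ 2 : ℝ) ^ n * (1 - ρ ^ 2) ^ 2) :=
        MeasureTheory.integral_const_mul _ _
    _ = Iaux n t s := by
        rw [Iaux, ← key, intervalIntegral.integral_of_le hts, integral_Ioc_eq_integral_Ioo]


lemma orth (m n : ℤ) {t s : ℝ} (ht : 0 < t) (hts : t ≤ s) :
    ∫ w in K t s, w ^ m * (starRingEnd ℂ) w ^ n * (((1 - ‖w‖ ^ 2) ^ 2 : ℝ) : ℂ) =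
      if m = n then ((2 * π * Iaux n t s : ℝ) : ℂ) else 0 := by
  set F : ℂ → ℂ := fun w => w ^ m * (starRingEnd ℂ) w ^ n * (((1 - ‖w‖ ^ 2) ^ 2 : ℝ) : ℂ) with hF
  have step1 : ∫ w in K t s, F w = ∫ w, (K t s).indicator F w :=
    (integral_indicator (measurableSet_K t s)).symm
  rw [step1, ← Complex.integral_comp_polarCoord_symm]
  have step2 : ∀ p ∈ polarCoord.target,
      p.1 • (K t s).indicator F (Complex.polarCoord.symm p)
        = (Icc t s ×ˢ (univ : Set ℝ)).indicator
            (fun q : ℝ × ℝ => q.1 • F (Complex.polarCoord.symm q)) p := by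
    intro p hp
    have hp1 : 0 < p.1 := hp.1
    have habs : ‖Complex.polarCoord.symm p‖ = p.1 := by
      rw [Complex.norm_polarCoord_symm, abs_of_pos hp1]
    by_cases hmem : t ≤ p.1 ∧ p.1 ≤ s
    · rw [Set.indicator_of_mem, Set.indicator_of_mem]
      · exact ⟨hmem, trivial⟩
      · exact ⟨by rw [habs]; exact hmem.1, by rw [habs]; exact hmem.2⟩
    · rw [Set.indicator_of_notMem, Set.indicator_of_notMem, smul_zero]
      · intro hc
        exact hmem ⟨hc.1.1, hc.1.2⟩
      · intro hc
        exact hmem ⟨habs ▸ hc.1, habs ▸ hc.2⟩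
  rw [setIntegral_congr_fun polarCoord.open_target.measurableSet step2,
    setIntegral_indicator (measurableSet_Icc.prod MeasurableSet.univ)]
  have hset : polarCoord.target ∩ (Icc t s ×ˢ (univ : Set ℝ)) = Icc t s ×ˢ Ioo (-π) π := by
    rw [polarCoord_target]
    ext p
    simp only [Set.mem_inter_iff, Set.mem_prod, Set.mem_Ioi, Set.mem_Ioo, Set.mem_Icc,
      Set.mem_univ, and_true]
    constructor
    · rintro ⟨⟨h1, h2⟩, h3, h4⟩
      exact ⟨⟨h3, h4⟩, h2⟩
    · rintro ⟨⟨h3, h4⟩, h2⟩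
      exact ⟨⟨lt_of_lt_of_le ht h3, h2⟩, h3, h4⟩
  rw [hset]
  have step3 : ∀ p ∈ Icc t s ×ˢ Ioo (-π) π,
      p.1 • F (Complex.polarCoord.symm p)
        = (fun ρ : ℝ => ((ρ ^ (m + n) * ρ * (1 - ρ ^ 2) ^ 2 : ℝ) : ℂ)) p.1
            * (fun θ : ℝ => Complex.exp (((m - n : ℤ) : ℂ) * (θ : ℂ) * Complex.I)) p.2 := by
    rintro p ⟨hp1, _⟩
    have hρ : (0:ℝ) < p.1 := lt_of_lt_of_le ht hp1.1
    have hρC : ((p.1 : ℝ) : ℂ) ≠ 0 := Complex.ofReal_ne_zero.2 hρ.ne'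
    have hsymm : Complex.polarCoord.symm p = (p.1 : ℂ) * Complex.exp ((p.2 : ℂ) * Complex.I) := by
      rw [Complex.polarCoord_symm_apply, Complex.exp_mul_I]
      simp [← Complex.ofReal_cos, ← Complex.ofReal_sin]
    have habs : ‖Complex.polarCoord.symm p‖ = p.1 := by
      rw [Complex.norm_polarCoord_symm, abs_of_pos hρ]
    have hconj : (starRingEnd ℂ) ((p.1 : ℂ) * Complex.exp ((p.2 : ℂ) * Complex.I))
        = (p.1 : ℂ) * Complex.exp (-((p.2 : ℂ) * Complex.I)) := by
      rw [map_mul, Complex.conj_ofReal, ← Complex.exp_conj]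
      congr 1
      simp [map_mul, Complex.conj_ofReal, Complex.conj_I]
    have habs2 : ‖(p.1 : ℂ) * Complex.exp ((p.2 : ℂ) * Complex.I)‖ = p.1 := by
      rw [← hsymm]; exact habs
    have heq : Complex.exp ((m : ℂ) * ((p.2 : ℂ) * Complex.I))
        * Complex.exp ((n : ℂ) * -((p.2 : ℂ) * Complex.I))
        = Complex.exp (((m - n : ℤ) : ℂ) * (p.2 : ℂ) * Complex.I) := by
      rw [← Complex.exp_add]
      congr 1
      push_cast
      ring
    simp only [hF, hsymm, hconj, mul_zpow, habs2]
    rw [← Complex.exp_int_mul, ← Complex.exp_int_mul, Complex.real_smul]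
    rw [Complex.ofReal_mul, Complex.ofReal_mul, Complex.ofReal_zpow, zpow_add₀ hρC]
    rw [← heq]
    ring
  rw [setIntegral_congr_fun (measurableSet_Icc.prod measurableSet_Ioo) step3,
    Measure.volume_eq_prod]
  rw [setIntegral_prod_mul (μ := (volume : Measure ℝ)) (ν := (volume : Measure ℝ))
    (fun ρ : ℝ => ((ρ ^ (m + n) * ρ * (1 - ρ ^ 2) ^ 2 : ℝ) : ℂ))
    (fun θ : ℝ => Complex.exp (((m - n : ℤ) : ℂ) * (θ : ℂ) * Complex.I))
    (Icc t s) (Ioo (-π) π), integral_theta (m - n)]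
  by_cases hmn : m = n
  · subst hmn
    rw [if_pos (sub_self m), if_pos rfl]
    have hor : (∫ x in Icc t s, ((x ^ (m + m) * x * (1 - x ^ 2) ^ 2 : ℝ) : ℂ))
        = ((∫ x in Icc t s, (x ^ (m + m) * x * (1 - x ^ 2) ^ 2 : ℝ) : ℝ) : ℂ) :=
      integral_ofReal
    rw [hor, integral_Icc_eq_integral_Ioc, integral_Ioc_eq_integral_Ioo,
      integral_radial m ht hts]
    push_cast
    ring
  · rw [if_neg (sub_ne_zero.2 hmn), if_neg hmn, mul_zero]


lemma contOn_zpow (k : ℤ) {t s : ℝ} (ht : 0 < t) :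
    ContinuousOn (fun w : ℂ => w ^ k) (K t s) := fun w hw =>
  (continuousAt_zpow₀ w k (Or.inl (by
    intro h0; rw [h0] at hw; simp [K] at hw; linarith [hw.1]))).continuousWithinAt

lemma contOn_conj_zpow (k : ℤ) {t s : ℝ} (ht : 0 < t) :
    ContinuousOn (fun w : ℂ => (starRingEnd ℂ) w ^ k) (K t s) := by
  intro w hw
  have hw0 : (starRingEnd ℂ) w ≠ 0 := by
    simp only [map_ne_zero]
    intro h0; rw [h0] at hw; simp [K] at hw; linarith [hw.1]
  exact ((continuousAt_zpow₀ _ k (Or.inl hw0)).comp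
    (Complex.continuous_conj.continuousAt)).continuousWithinAt

lemma contOn_omega : Continuous (fun w : ℂ => (((1 - ‖w‖ ^ 2) ^ 2 : ℝ) : ℂ)) := by
  fun_prop

lemma norm_zpow_le {w : ℂ} {t s : ℝ} (ht : 0 < t) (hw : w ∈ K t s) (m : ℤ) :
    ‖w‖ ^ m ≤ t ^ m + s ^ m := by
  obtain ⟨hw1, hw2⟩ := hw
  have hw0 : 0 < ‖w‖ := lt_of_lt_of_le ht hw1
  rcases le_or_gt 0 m with hm | hm
  · obtain ⟨k, rfl⟩ := Int.eq_ofNat_of_zero_le hm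
    rw [zpow_natCast, zpow_natCast]
    calc ‖w‖ ^ k ≤ s ^ k := pow_le_pow_left₀ (norm_nonneg w) hw2 k
      _ ≤ t ^ (k:ℤ) + s ^ k := by
          rw [zpow_natCast]; exact le_add_of_nonneg_left (pow_pos ht k).le
  · obtain ⟨k, rfl⟩ : ∃ k : ℕ, m = -(k : ℤ) := ⟨m.natAbs, by omega⟩
    rw [zpow_neg, zpow_neg, zpow_natCast, zpow_natCast]
    calc (‖w‖ ^ k)⁻¹ ≤ (t ^ k)⁻¹ := by
          apply inv_anti₀ (pow_pos ht k)
          exact pow_le_pow_left₀ ht.le hw1 k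
      _ ≤ (t ^ k)⁻¹ + (s ^ (-(k:ℤ))) :=
          le_add_of_nonneg_right (zpow_pos (lt_of_lt_of_le hw0 hw2) _).le

lemma integrableOn_K {t s : ℝ} (g : ℂ → ℂ) (hg : ContinuousOn g (K t s)) :
    IntegrableOn g (K t s) := hg.integrableOn_compact (isCompact_K t s)

lemma K_subset_annulus {r t s : ℝ} (h1t : 1 < t) (hsr : s < r) :
    K t s ⊆ annulus r := fun w hw => ⟨lt_of_lt_of_le h1t hw.1, lt_of_le_of_lt hw.2 hsr⟩

lemma mem_annulus_ofReal {r x : ℝ} (h1 : 1 < x) (h2 : x < r) : (x : ℂ) ∈ annulus r := by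
  constructor <;> simp [Complex.norm_real, abs_of_pos (by linarith : (0:ℝ) < x)] <;> assumption

lemma coeff_integral {r t s : ℝ} (h1t : 1 < t) (hts : t ≤ s) (hsr : s < r)
    {f : ℂ → ℂ} {a : ℤ → ℂ} (hf : DifferentiableOn ℂ f (annulus r))
    (ha : ∀ z ∈ annulus r, HasSum (fun n : ℤ => a n * z ^ n) (f z)) (n : ℤ) :
    ∫ w in K t s, f w * ((starRingEnd ℂ) w ^ n * (((1 - ‖w‖ ^ 2) ^ 2 : ℝ) : ℂ))
      = a n * ((2 * π * Iaux n t s : ℝ) : ℂ) := by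
  have ht : (0:ℝ) < t := by linarith
  set G : ℂ → ℂ := fun w => (starRingEnd ℂ) w ^ n * (((1 - ‖w‖ ^ 2) ^ 2 : ℝ) : ℂ) with hG
  have hGcont : ContinuousOn G (K t s) :=
    (contOn_conj_zpow n ht).mul contOn_omega.continuousOn
  obtain ⟨C, hC⟩ := (isCompact_K t s).exists_bound_of_continuousOn hGcont
  set C' : ℝ := max C 0 with hC'
  have hC'0 : 0 ≤ C' := le_max_right _ _
  have hGbd : ∀ w ∈ K t s, ‖G w‖ ≤ C' := fun w hw => le_trans (hC w hw) (le_max_left _ _)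
  -- domination sequence
  set M : ℤ → ℝ := fun m => ‖a m * (t:ℂ) ^ m‖ + ‖a m * (s:ℂ) ^ m‖ with hM
  have h1s : 1 < s := lt_of_lt_of_le h1t hts
  have htr : t < r := lt_of_le_of_lt hts hsr
  have hMsum : Summable M := by
    apply Summable.add
    · exact summable_norm_iff.2 (ha _ (mem_annulus_ofReal h1t htr)).summable
    · exact summable_norm_iff.2 (ha _ (mem_annulus_ofReal h1s hsr)).summable
  have hMnn : ∀ m, 0 ≤ M m := fun m => add_nonneg (norm_nonneg _) (norm_nonneg _)
  have hdom : ∀ m : ℤ, ∀ w ∈ K t s, ‖a m * w ^ m‖ ≤ M m := by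
    intro m w hw
    have h1 : ‖a m * w ^ m‖ = ‖a m‖ * ‖w‖ ^ m := by rw [norm_mul, norm_zpow]
    have h2 : M m = ‖a m‖ * (t ^ m + s ^ m) := by
      rw [hM]
      simp only [norm_mul, norm_zpow, Complex.norm_real,
        abs_of_pos ht, abs_of_pos (lt_of_lt_of_le ht hts)]
      push_cast [Complex.norm_real]
      rw [Real.norm_eq_abs, Real.norm_eq_abs, abs_of_pos ht, abs_of_pos (lt_of_lt_of_le ht hts)]
      ring
    rw [h1, h2]
    exact mul_le_mul_of_nonneg_left (norm_zpow_le ht hw m) (norm_nonneg _)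
  set c : ℂ := ((2 * π * Iaux n t s : ℝ) : ℂ) with hc
  have hSu : ∀ u : Finset ℤ, (∫ w in K t s, (∑ m ∈ u, a m * w ^ m) * G w)
      = if n ∈ u then a n * c else 0 := by
    intro u
    have hpt : ∀ w ∈ K t s, (∑ m ∈ u, a m * w ^ m) * G w
        = ∑ m ∈ u, a m * (w ^ m * (starRingEnd ℂ) w ^ n * (((1 - ‖w‖ ^ 2) ^ 2 : ℝ) : ℂ)) := by
      intro w _
      rw [Finset.sum_mul]
      refine Finset.sum_congr rfl fun m _ => ?_
      rw [hG]; ring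
    rw [setIntegral_congr_fun (measurableSet_K t s) hpt, integral_finset_sum]
    · have : ∀ m ∈ u, (∫ w in K t s,
          a m * (w ^ m * (starRingEnd ℂ) w ^ n * (((1 - ‖w‖ ^ 2) ^ 2 : ℝ) : ℂ)))
          = if m = n then a n * c else 0 := by
        intro m _
        rw [integral_const_mul, orth m n ht hts]
        by_cases hmn : m = n
        · subst hmn; simp [hc]
        · simp [hmn]
      rw [Finset.sum_congr rfl this, Finset.sum_ite_eq' u n (fun _ => a n * c)]
    · intro m _
      apply Integrable.const_mul
      apply integrableOn_K
      exact ((contOn_zpow m ht).mul (contOn_conj_zpow n ht)).mul contOn_omega.continuousOn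
  -- dominated convergence
  have hKsub := K_subset_annulus (r := r) h1t hsr
  have hfG : ContinuousOn (fun w => f w * G w) (K t s) :=
    ((hf.continuousOn.mono hKsub).mul hGcont)
  have hlim : Filter.Tendsto (fun u : Finset ℤ => ∫ w in K t s, (∑ m ∈ u, a m * w ^ m) * G w)
      Filter.atTop (𝓝 (∫ w in K t s, f w * G w)) := by
    apply tendsto_integral_filter_of_dominated_convergence
      (bound := fun _ => (∑' m, M m) * C')
    · apply Filter.Eventually.of_forall
      intro u
      apply ContinuousOn.aestronglyMeasurable _ (measurableSet_K t s)
      refine ContinuousOn.mul ?_ hGcont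
      exact continuousOn_finset_sum u fun m _ => continuousOn_const.mul (contOn_zpow m ht)
    · apply Filter.Eventually.of_forall
      intro u
      rw [ae_restrict_iff' (measurableSet_K t s)]
      apply Filter.Eventually.of_forall
      intro w hw
      rw [norm_mul]
      have hb1 : ‖∑ m ∈ u, a m * w ^ m‖ ≤ ∑' m, M m := by
        calc ‖∑ m ∈ u, a m * w ^ m‖ ≤ ∑ m ∈ u, ‖a m * w ^ m‖ := norm_sum_le _ _
          _ ≤ ∑ m ∈ u, M m := Finset.sum_le_sum fun m _ => hdom m w hw
          _ ≤ ∑' m, M m := Summable.sum_le_tsum u (fun m _ => hMnn m) hMsum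
      exact mul_le_mul hb1 (hGbd w hw) (norm_nonneg _)
        (le_trans (norm_nonneg _) hb1)
    · exact integrableOn_const (isCompact_K t s).measure_lt_top.ne
    · rw [ae_restrict_iff' (measurableSet_K t s)]
      apply Filter.Eventually.of_forall
      intro w hw
      exact Filter.Tendsto.mul_const (G w) (ha w (hKsub hw))
  have hconst : Filter.Tendsto (fun u : Finset ℤ => ∫ w in K t s, (∑ m ∈ u, a m * w ^ m) * G w)
      Filter.atTop (𝓝 (a n * c)) := by
    refine Filter.Tendsto.congr' ?_ tendsto_const_nhds
    filter_upwards [Filter.eventually_ge_atTop ({n} : Finset ℤ)] with u hu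
    rw [hSu u, if_pos (hu (Finset.mem_singleton_self n))]
  exact tendsto_nhds_unique hlim hconst


lemma bessel {r t s : ℝ} (h1t : 1 < t) (hts : t ≤ s) (hsr : s < r)
    {f : ℂ → ℂ} {a : ℤ → ℂ} (hf : DifferentiableOn ℂ f (annulus r))
    (ha : ∀ z ∈ annulus r, HasSum (fun n : ℤ => a n * z ^ n) (f z)) (u : Finset ℤ) :
    (∑ n ∈ u, ‖a n‖ ^ 2 * (2 * π * Iaux n t s))
      ≤ ∫ w in K t s, (1 - ‖w‖ ^ 2) ^ 2 * ‖f w‖ ^ 2 := by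
  have ht : (0:ℝ) < t := by linarith
  set Ω : ℂ → ℂ := fun w => (((1 - ‖w‖ ^ 2) ^ 2 : ℝ) : ℂ) with hΩ
  set g : ℂ → ℂ := fun w => ∑ n ∈ u, a n * w ^ n with hg
  have hgc : ContinuousOn g (K t s) :=
    continuousOn_finset_sum u fun m _ => continuousOn_const.mul (contOn_zpow m ht)
  have hfc : ContinuousOn f (K t s) :=
    hf.continuousOn.mono (K_subset_annulus h1t hsr)
  set Q : ℝ := ∑ n ∈ u, ‖a n‖ ^ 2 * (2 * π * Iaux n t s) with hQ
  have hconjg : ∀ w : ℂ, (starRingEnd ℂ) (g w)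
      = ∑ n ∈ u, (starRingEnd ℂ) (a n) * (starRingEnd ℂ) w ^ n := by
    intro w
    rw [hg]
    simp only [map_sum, map_mul, map_zpow₀]
  have hconjgc : ContinuousOn (fun w => (starRingEnd ℂ) (g w)) (K t s) := by
    rw [funext hconjg]
    exact continuousOn_finset_sum u fun m _ => continuousOn_const.mul (contOn_conj_zpow m ht)
  have hconjfc : ContinuousOn (fun w => (starRingEnd ℂ) (f w)) (K t s) :=
    Complex.continuous_conj.comp_continuousOn hfc
  -- A : cross term
  have hA : ∫ w in K t s, f w * (starRingEnd ℂ) (g w) * Ω w = ((Q : ℝ) : ℂ) := by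
    have hpt : ∀ w ∈ K t s, f w * (starRingEnd ℂ) (g w) * Ω w
        = ∑ n ∈ u, (starRingEnd ℂ) (a n)
            * (f w * ((starRingEnd ℂ) w ^ n * Ω w)) := by
      intro w _
      rw [hconjg, Finset.mul_sum, Finset.sum_mul]
      exact Finset.sum_congr rfl fun n _ => by ring
    rw [setIntegral_congr_fun (measurableSet_K t s) hpt, integral_finset_sum]
    · have hterm : ∀ n ∈ u, (∫ w in K t s, (starRingEnd ℂ) (a n)
          * (f w * ((starRingEnd ℂ) w ^ n * Ω w)))
          = (((‖a n‖ ^ 2 * (2 * π * Iaux n t s) : ℝ)) : ℂ) := by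
        intro n _
        rw [integral_const_mul, coeff_integral h1t hts hsr hf ha n, ← mul_assoc,
          Complex.conj_mul']
        push_cast
        ring
      rw [Finset.sum_congr rfl hterm, hQ]
      push_cast
      ring
    · intro n _
      apply Integrable.const_mul
      apply integrableOn_K
      exact hfc.mul ((contOn_conj_zpow n ht).mul contOn_omega.continuousOn)
  -- B : conjugate cross term
  have hB : ∫ w in K t s, g w * (starRingEnd ℂ) (f w) * Ω w = ((Q : ℝ) : ℂ) := by
    have : ∀ w : ℂ, g w * (starRingEnd ℂ) (f w) * Ω w
        = (starRingEnd ℂ) (f w * (starRingEnd ℂ) (g w) * Ω w) := by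
      intro w
      simp only [map_mul, Complex.conj_conj, hΩ, Complex.conj_ofReal]
      ring
    rw [funext this, integral_conj, hA, Complex.conj_ofReal]
  -- C : ∫ |g|^2 Ω
  have hCint : ∫ w in K t s, g w * (starRingEnd ℂ) (g w) * Ω w = ((Q : ℝ) : ℂ) := by
    have hpt : ∀ w ∈ K t s, g w * (starRingEnd ℂ) (g w) * Ω w
        = ∑ m ∈ u, ∑ n ∈ u, (a m * (starRingEnd ℂ) (a n))
            * (w ^ m * (starRingEnd ℂ) w ^ n * Ω w) := by
      intro w _
      rw [hconjg, hg]
      rw [Finset.sum_mul_sum]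
      rw [Finset.sum_mul]
      refine Finset.sum_congr rfl fun m _ => ?_
      rw [Finset.sum_mul]
      exact Finset.sum_congr rfl fun n _ => by ring
    rw [setIntegral_congr_fun (measurableSet_K t s) hpt, integral_finset_sum]
    · have houter : ∀ m ∈ u, (∫ w in K t s, ∑ n ∈ u, (a m * (starRingEnd ℂ) (a n))
          * (w ^ m * (starRingEnd ℂ) w ^ n * Ω w))
          = (((‖a m‖ ^ 2 * (2 * π * Iaux m t s) : ℝ)) : ℂ) := by
        intro m hm
        rw [integral_finset_sum]
        · have hin : ∀ n ∈ u, (∫ w in K t s, (a m * (starRingEnd ℂ) (a n))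
              * (w ^ m * (starRingEnd ℂ) w ^ n * Ω w))
              = if m = n then (a m * (starRingEnd ℂ) (a m)) * ((2 * π * Iaux m t s : ℝ) : ℂ)
                else 0 := by
            intro n _
            rw [integral_const_mul, orth m n ht hts]
            by_cases hmn : m = n
            · subst hmn; simp
            · simp [hmn]
          rw [Finset.sum_congr rfl hin, Finset.sum_ite_eq u m, if_pos hm, Complex.mul_conj]
          simp only [Complex.normSq_eq_norm_sq]
          push_cast
          ring
        · intro n _
          apply Integrable.const_mul
          apply integrableOn_K
          exact ((contOn_zpow m ht).mul (contOn_conj_zpow n ht)).mul contOn_omega.continuousOn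
      rw [Finset.sum_congr rfl houter, hQ]
      push_cast
      ring
    · intro m _
      apply integrableOn_K
      apply continuousOn_finset_sum
      intro n _
      exact continuousOn_const.mul
        (((contOn_zpow m ht).mul (contOn_conj_zpow n ht)).mul contOn_omega.continuousOn)
  -- squared-norm identities
  have hsq : ∀ h : ℂ → ℂ, ContinuousOn h (K t s) →
      ∫ w in K t s, h w * (starRingEnd ℂ) (h w) * Ω w
        = (((∫ w in K t s, (1 - ‖w‖ ^ 2) ^ 2 * ‖h w‖ ^ 2 : ℝ)) : ℂ) := by
    intro h hc
    have hpt : ∀ w : ℂ, h w * (starRingEnd ℂ) (h w) * Ω w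
        = ((((1 - ‖w‖ ^ 2) ^ 2 * ‖h w‖ ^ 2 : ℝ)) : ℂ) := by
      intro w
      rw [Complex.mul_conj, hΩ]
      simp only [Complex.normSq_eq_norm_sq]
      push_cast
      ring
    rw [funext hpt]
    exact integral_ofReal
  -- expand ∫ |f-g|^2 Ω ≥ 0
  have hfg : ContinuousOn (fun w => f w - g w) (K t s) := hfc.sub hgc
  have hnonneg : 0 ≤ ∫ w in K t s, (1 - ‖w‖ ^ 2) ^ 2 * ‖f w - g w‖ ^ 2 :=
    setIntegral_nonneg (measurableSet_K t s) fun w _ => by positivity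
  have hexpand : ∫ w in K t s, (f w - g w) * (starRingEnd ℂ) (f w - g w) * Ω w
      = (((∫ w in K t s, (1 - ‖w‖ ^ 2) ^ 2 * ‖f w‖ ^ 2 : ℝ)) : ℂ) - ((Q : ℝ) : ℂ) := by
    have hpt : ∀ w : ℂ, (f w - g w) * (starRingEnd ℂ) (f w - g w) * Ω w
        = f w * (starRingEnd ℂ) (f w) * Ω w - f w * (starRingEnd ℂ) (g w) * Ω w
          - g w * (starRingEnd ℂ) (f w) * Ω w + g w * (starRingEnd ℂ) (g w) * Ω w := by
      intro w
      simp only [map_sub]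
      ring
    rw [funext hpt]
    have i1 : IntegrableOn (fun w => f w * (starRingEnd ℂ) (f w) * Ω w) (K t s) :=
      integrableOn_K _ ((hfc.mul hconjfc).mul contOn_omega.continuousOn)
    have i2 : IntegrableOn (fun w => f w * (starRingEnd ℂ) (g w) * Ω w) (K t s) :=
      integrableOn_K _ ((hfc.mul hconjgc).mul contOn_omega.continuousOn)
    have i3 : IntegrableOn (fun w => g w * (starRingEnd ℂ) (f w) * Ω w) (K t s) :=
      integrableOn_K _ ((hgc.mul hconjfc).mul contOn_omega.continuousOn)
    have i4 : IntegrableOn (fun w => g w * (starRingEnd ℂ) (g w) * Ω w) (K t s) :=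
      integrableOn_K _ ((hgc.mul hconjgc).mul contOn_omega.continuousOn)
    have hI2 : Integrable (fun w => f w * (starRingEnd ℂ) (f w) * Ω w
        - f w * (starRingEnd ℂ) (g w) * Ω w) (volume.restrict (K t s)) := i1.sub i2
    have hI1 : Integrable (fun w => f w * (starRingEnd ℂ) (f w) * Ω w
        - f w * (starRingEnd ℂ) (g w) * Ω w - g w * (starRingEnd ℂ) (f w) * Ω w)
        (volume.restrict (K t s)) := hI2.sub i3
    rw [integral_add hI1 i4, integral_sub hI2 i3, integral_sub i1 i2,
      hA, hB, hCint, hsq f hfc]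
    ring
  have hexpand2 : (((∫ w in K t s, (1 - ‖w‖ ^ 2) ^ 2 * ‖f w - g w‖ ^ 2 : ℝ)) : ℂ)
      = (((∫ w in K t s, (1 - ‖w‖ ^ 2) ^ 2 * ‖f w‖ ^ 2 : ℝ)) : ℂ) - ((Q : ℝ) : ℂ) := by
    rw [← hsq _ hfg, hexpand]
  rw [← Complex.ofReal_sub] at hexpand2
  have := Complex.ofReal_inj.1 hexpand2
  linarith [hnonneg, this]


lemma contOn_integrand (n : ℤ) {A : Set ℝ} (hA : ∀ x ∈ A, 0 < x) :
    ContinuousOn (fun ρ : ℝ => ρ ^ n * (1 - ρ) ^ 2) A := by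
  refine ContinuousOn.mul ?_ (by fun_prop)
  intro x hx
  exact (continuousAt_zpow₀ _ _ (Or.inl (hA x hx).ne')).continuousWithinAt

lemma laurentI_pos (n : ℤ) {r : ℝ} (hr : 1 < r) : 0 < laurentI n r := by
  have hr2 : 1 < r ^ 2 := by nlinarith
  have hint : IntervalIntegrable (fun ρ : ℝ => ρ ^ n * (1 - ρ) ^ 2) volume 1 (r ^ 2) := by
    apply ContinuousOn.intervalIntegrable
    apply contOn_integrand
    intro x hx
    rw [uIcc_of_le hr2.le] at hx
    linarith [hx.1]
  have hpos := intervalIntegral.intervalIntegral_pos_of_pos_on hint (fun x hx => ?_) hr2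
  · rw [laurentI]; linarith
  · have hx1 : 1 < x := hx.1
    apply mul_pos (zpow_pos (by linarith) n)
    have : 1 - x ≠ 0 := by intro h; linarith [hx.1]
    positivity

lemma tendsto_Iaux (n : ℤ) {r : ℝ} (hr : 1 < r) {tk sk : ℕ → ℝ}
    (htk : ∀ k, 1 < tk k) (hsk : ∀ k, sk k < r) (htsk : ∀ k, tk k ≤ sk k)
    (hlt : Tendsto tk atTop (𝓝 1)) (hls : Tendsto sk atTop (𝓝 r)) :
    Tendsto (fun k => Iaux n (tk k) (sk k)) atTop (𝓝 (laurentI n r)) := by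
  set g : ℝ → ℝ := fun ρ => ρ ^ n * (1 - ρ) ^ 2 with hg
  have hr2 : (1:ℝ) ≤ r ^ 2 := by nlinarith
  have hgint : IntegrableOn g (uIcc 1 (r ^ 2)) volume := by
    rw [uIcc_of_le hr2]
    apply ContinuousOn.integrableOn_compact isCompact_Icc
    exact contOn_integrand n (fun x hx => by linarith [hx.1])
  set Φ : ℝ → ℝ := fun x => ∫ ρ in (1:ℝ)..x, g ρ with hΦ
  have hΦc : ContinuousOn Φ (Icc 1 (r ^ 2)) := by
    have := intervalIntegral.continuousOn_primitive_interval (a := 1) (b := r ^ 2) (f := g)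
      (μ := volume) hgint
    rwa [uIcc_of_le hr2] at this
  have hginti : ∀ x ∈ Icc (1:ℝ) (r ^ 2), IntervalIntegrable g volume 1 x := by
    intro x hx
    apply (hgint.mono_set _).intervalIntegrable
    rw [uIcc_of_le hx.1, uIcc_of_le hr2]
    exact Icc_subset_Icc le_rfl hx.2
  have hmem : ∀ k, (tk k) ^ 2 ∈ Icc (1:ℝ) (r ^ 2) ∧ (sk k) ^ 2 ∈ Icc (1:ℝ) (r ^ 2) := by
    intro k
    have h1 := htk k
    have h2 := hsk k
    have h3 := htsk k
    constructor
    · constructor <;> nlinarith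
    · constructor <;> nlinarith
  have hIeq : ∀ k, Iaux n (tk k) (sk k) = (1/2) * (Φ ((sk k) ^ 2) - Φ ((tk k) ^ 2)) := by
    intro k
    rw [Iaux, hΦ]
    rw [intervalIntegral.integral_interval_sub_left (hginti _ (hmem k).2)
      (hginti _ (hmem k).1)]
  have hlim2 : ∀ (c : ℝ) (h : ℕ → ℝ), (∀ k, h k ^ 2 ∈ Icc (1:ℝ) (r ^ 2)) →
      Tendsto h atTop (𝓝 c) → c ^ 2 ∈ Icc (1:ℝ) (r ^ 2) →
      Tendsto (fun k => Φ (h k ^ 2)) atTop (𝓝 (Φ (c ^ 2))) := by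
    intro c h hmem' hh hc
    have hsq : Tendsto (fun k => h k ^ 2) atTop (𝓝 (c ^ 2)) := hh.pow 2
    have hW : Tendsto (fun k => h k ^ 2) atTop (𝓝[Icc (1:ℝ) (r^2)] (c ^ 2)) := by
      rw [tendsto_nhdsWithin_iff]
      exact ⟨hsq, Eventually.of_forall hmem'⟩
    exact ((hΦc.continuousWithinAt hc).tendsto).comp hW
  have hΦ1 : Φ 1 = 0 := by rw [hΦ]; simp
  have htlim : Tendsto (fun k => Φ (tk k ^ 2)) atTop (𝓝 0) := by
    have := hlim2 1 tk (fun k => (hmem k).1) hlt (by constructor <;> nlinarith)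
    simpa [hΦ1] using this
  have hslim : Tendsto (fun k => Φ (sk k ^ 2)) atTop (𝓝 (Φ (r ^ 2))) :=
    hlim2 r sk (fun k => (hmem k).2) hls (by constructor <;> nlinarith)
  have : Tendsto (fun k => (1/2 : ℝ) * (Φ (sk k ^ 2) - Φ (tk k ^ 2))) atTop
      (𝓝 ((1/2) * (Φ (r ^ 2) - 0))) := (hslim.sub htlim).const_mul _
  rw [funext hIeq]
  simpa [laurentI] using this


end Stmt1Aux
end

open Stmt1Aux

/-- Cauchy–Schwarz bound: if `f` is holomorphic on `𝔸_r` with Laurent expansion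
`∑ aₙ zⁿ`, then for every `z ∈ 𝔸_r` for which `∑_{n ∈ ℤ} |z|^{2n}/Iₙ(r)` converges,
`|f(z)| ≤ (1/√(2π)) (∬_{𝔸_r} (1-|w|²)²|f(w)|² dA)^{1/2} (∑ |z|^{2n}/Iₙ(r))^{1/2}`. -/
theorem stmt1 (r : ℝ) (hr : 1 < r) (f : ℂ → ℂ) (a : ℤ → ℂ)
    (hf : DifferentiableOn ℂ f (annulus r))
    (ha : ∀ z ∈ annulus r, HasSum (fun n : ℤ => a n * z ^ n) (f z))
    (z : ℂ) (hz : z ∈ annulus r)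
    (hsum : Summable (fun n : ℤ => ‖z‖ ^ (2 * n) / laurentI n r)) :
    ENNReal.ofReal ‖f z‖ ≤
      ENNReal.ofReal (1 / Real.sqrt (2 * Real.pi)) *
        (∫⁻ w in annulus r, ENNReal.ofReal ((1 - ‖w‖ ^ 2) ^ 2 * ‖f w‖ ^ 2)) ^ (1/2 : ℝ) *
        ENNReal.ofReal (Real.sqrt (∑' n : ℤ, ‖z‖ ^ (2 * n) / laurentI n r)) := by
  set J := ∫⁻ w in annulus r, ENNReal.ofReal ((1 - ‖w‖ ^ 2) ^ 2 * ‖f w‖ ^ 2) with hJdef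
  have h2π : (0:ℝ) < 2 * π := by positivity
  have hsqrt2π : 0 < Real.sqrt (2 * π) := Real.sqrt_pos.2 h2π
  have hIpos : ∀ n : ℤ, 0 < laurentI n r := fun n => laurentI_pos n hr
  have hY0 : ∀ n : ℤ, 0 ≤ ‖z‖ ^ (2 * n) / laurentI n r :=
    fun n => div_nonneg (zpow_nonneg (norm_nonneg z) _) (hIpos n).le
  have hS0 : 0 < ∑' n : ℤ, ‖z‖ ^ (2 * n) / laurentI n r := by
    refine Summable.tsum_pos hsum hY0 0 ?_
    simp only [mul_zero, zpow_zero]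
    exact div_pos one_pos (hIpos 0)
  have hsqS : 0 < Real.sqrt (∑' n : ℤ, ‖z‖ ^ (2 * n) / laurentI n r) := Real.sqrt_pos.2 hS0
  rcases eq_or_ne J ⊤ with hJt | hJt
  · rw [hJt, ENNReal.top_rpow_of_pos (by norm_num : (0:ℝ) < 1/2),
      ENNReal.mul_top (by simp only [ne_eq, ENNReal.ofReal_eq_zero, not_le]; positivity),
      ENNReal.top_mul (by simp only [ne_eq, ENNReal.ofReal_eq_zero, not_le]; exact hsqS)]
    exact le_top
  -- main case
  set B := J.toReal with hBdef
  have hB0 : 0 ≤ B := ENNReal.toReal_nonneg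
  have hKle : ∀ t s : ℝ, 1 < t → t ≤ s → s < r →
      (∫ w in K t s, (1 - ‖w‖ ^ 2) ^ 2 * ‖f w‖ ^ 2) ≤ B := by
    intro t s h1t hts hsr
    have hfc : ContinuousOn f (K t s) := hf.continuousOn.mono (K_subset_annulus h1t hsr)
    have hint : IntegrableOn (fun w : ℂ => (1 - ‖w‖ ^ 2) ^ 2 * ‖f w‖ ^ 2) (K t s) := by
      apply ContinuousOn.integrableOn_compact (isCompact_K t s)
      exact ContinuousOn.mul (by fun_prop) ((hfc.norm).pow 2)
    have heq : ENNReal.ofReal (∫ w in K t s, (1 - ‖w‖ ^ 2) ^ 2 * ‖f w‖ ^ 2)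
        = ∫⁻ w in K t s, ENNReal.ofReal ((1 - ‖w‖ ^ 2) ^ 2 * ‖f w‖ ^ 2) :=
      ofReal_integral_eq_lintegral_ofReal hint
        (Filter.Eventually.of_forall fun w => by positivity)
    have hmono : (∫⁻ w in K t s, ENNReal.ofReal ((1 - ‖w‖ ^ 2) ^ 2 * ‖f w‖ ^ 2)) ≤ J := by
      rw [hJdef]
      exact lintegral_mono_set (K_subset_annulus h1t hsr)
    exact (ENNReal.ofReal_le_iff_le_toReal hJt).1 (heq ▸ hmono)
  -- sequences
  have hBessel : ∀ u : Finset ℤ, (∑ n ∈ u, ‖a n‖ ^ 2 * (2 * π * laurentI n r)) ≤ B := by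
    intro u
    set tk : ℕ → ℝ := fun k => 1 + (r - 1) / (k + 3) with htkdef
    set sk : ℕ → ℝ := fun k => r - (r - 1) / (k + 3) with hskdef
    have hk3 : ∀ k : ℕ, (0:ℝ) < (k:ℝ) + 3 := fun k => by positivity
    have hek : ∀ k : ℕ, 0 < (r - 1) / ((k:ℝ) + 3) := fun k =>
      div_pos (by linarith) (hk3 k)
    have htk : ∀ k, 1 < tk k := fun k => by
      have := hek k; simp only [htkdef]; linarith
    have hsk : ∀ k, sk k < r := fun k => by
      have := hek k; simp only [hskdef]; linarith
    have htsk : ∀ k, tk k ≤ sk k := by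
      intro k
      have h0 : (0:ℝ) ≤ (k:ℝ) := Nat.cast_nonneg k
      have he2 : (r - 1) / ((k:ℝ) + 3) ≤ (r - 1) / 2 :=
        div_le_div_of_nonneg_left (by linarith) (by norm_num) (by linarith)
      simp only [htkdef, hskdef]
      linarith
    have hlt : Tendsto tk atTop (𝓝 1) := by
      have h0 : Tendsto (fun k : ℕ => (r - 1) / ((k:ℝ) + 3)) atTop (𝓝 0) :=
        Tendsto.div_atTop tendsto_const_nhds
          (tendsto_atTop_add_const_right atTop 3 tendsto_natCast_atTop_atTop)
      have := h0.const_add (1:ℝ)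
      simpa using this
    have hls : Tendsto sk atTop (𝓝 r) := by
      have h0 : Tendsto (fun k : ℕ => (r - 1) / ((k:ℝ) + 3)) atTop (𝓝 0) :=
        Tendsto.div_atTop tendsto_const_nhds
          (tendsto_atTop_add_const_right atTop 3 tendsto_natCast_atTop_atTop)
      have := h0.const_sub r
      simpa using this
    have hlimsum : Tendsto (fun k => ∑ n ∈ u, ‖a n‖ ^ 2 * (2 * π * Iaux n (tk k) (sk k)))
        atTop (𝓝 (∑ n ∈ u, ‖a n‖ ^ 2 * (2 * π * laurentI n r))) := by
      apply tendsto_finset_sum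
      intro n _
      exact (((tendsto_Iaux n hr htk hsk htsk hlt hls).const_mul (2 * π)).const_mul
        (‖a n‖ ^ 2))
    refine le_of_tendsto hlimsum (Filter.Eventually.of_forall fun k => ?_)
    exact le_trans (bessel (htk k) (htsk k) (hsk k) hf ha u)
      (hKle (tk k) (sk k) (htk k) (htsk k) (hsk k))
  -- Cauchy-Schwarz
  set X : ℤ → ℝ := fun n => ‖a n‖ ^ 2 * laurentI n r with hXdef
  have hX0 : ∀ n, 0 ≤ X n := fun n => mul_nonneg (sq_nonneg _) (hIpos n).le
  have hXle : ∀ u : Finset ℤ, (∑ n ∈ u, X n) ≤ B / (2 * π) := by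
    intro u
    rw [le_div_iff₀ h2π]
    calc (∑ n ∈ u, X n) * (2 * π) = ∑ n ∈ u, ‖a n‖ ^ 2 * (2 * π * laurentI n r) := by
          rw [Finset.sum_mul]
          exact Finset.sum_congr rfl fun n _ => by rw [hXdef]; ring
      _ ≤ B := hBessel u
  have hXsumm : Summable X := summable_of_sum_le hX0 hXle
  have htsumX : ∑' n, X n ≤ B / (2 * π) := Summable.tsum_le_of_sum_le hXsumm hXle
  have htsumX0 : 0 ≤ ∑' n, X n := tsum_nonneg hX0
  set x : ℤ → ℝ := fun n => ‖a n‖ * Real.sqrt (laurentI n r) with hxdef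
  set y : ℤ → ℝ := fun n => ‖z‖ ^ n / Real.sqrt (laurentI n r) with hydef
  have hsqrtpos : ∀ n : ℤ, 0 < Real.sqrt (laurentI n r) := fun n => Real.sqrt_pos.2 (hIpos n)
  have hx0 : ∀ n, 0 ≤ x n := fun n => mul_nonneg (norm_nonneg _) (hsqrtpos n).le
  have hy0 : ∀ n, 0 ≤ y n := fun n => div_nonneg (zpow_nonneg (norm_nonneg z) n) (hsqrtpos n).le
  have hxsq : ∀ n, x n ^ 2 = X n := by
    intro n
    rw [hxdef, hXdef]
    rw [mul_pow, Real.sq_sqrt (hIpos n).le]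
  have hzpow : ∀ n : ℤ, (‖z‖ ^ n) ^ 2 = ‖z‖ ^ (2 * n) := by
    intro n
    rw [← zpow_natCast (‖z‖ ^ n) 2, ← zpow_mul, mul_comm]
    norm_cast
  have hysq : ∀ n, y n ^ 2 = ‖z‖ ^ (2 * n) / laurentI n r := by
    intro n
    rw [hydef]
    rw [div_pow, Real.sq_sqrt (hIpos n).le, hzpow n]
  have hxy : ∀ n, x n * y n = ‖a n‖ * ‖z‖ ^ n := by
    intro n
    have hne : Real.sqrt (laurentI n r) ≠ 0 := (hsqrtpos n).ne'
    rw [hxdef, hydef]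
    field_simp
  have hsummxy : Summable (fun n => x n * y n) := by
    refine Summable.of_nonneg_of_le (fun n => mul_nonneg (hx0 n) (hy0 n)) (fun n => ?_)
      ((hXsumm.add hsum).div_const 2)
    have h1 : x n * y n ≤ (x n ^ 2 + y n ^ 2) / 2 := by nlinarith [sq_nonneg (x n - y n)]
    rw [hxsq, hysq] at h1
    exact h1
  have hCS : (∑' n, x n * y n)
      ≤ Real.sqrt (∑' n, X n) * Real.sqrt (∑' n : ℤ, ‖z‖ ^ (2 * n) / laurentI n r) := by
    apply Summable.tsum_le_of_sum_le hsummxy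
    intro u
    have h1 : (∑ n ∈ u, x n * y n) ^ 2 ≤ (∑ n ∈ u, x n ^ 2) * (∑ n ∈ u, y n ^ 2) :=
      Finset.sum_mul_sq_le_sq_mul_sq u x y
    have h2 : (∑ n ∈ u, x n * y n) ≤
        Real.sqrt ((∑ n ∈ u, x n ^ 2) * (∑ n ∈ u, y n ^ 2)) := by
      rw [show (∑ n ∈ u, x n * y n) = Real.sqrt ((∑ n ∈ u, x n * y n) ^ 2) from
        (Real.sqrt_sq (Finset.sum_nonneg fun n _ => mul_nonneg (hx0 n) (hy0 n))).symm]
      exact Real.sqrt_le_sqrt h1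
    refine le_trans h2 ?_
    rw [Real.sqrt_mul (Finset.sum_nonneg fun n _ => sq_nonneg _)]
    apply mul_le_mul
    · apply Real.sqrt_le_sqrt
      rw [Finset.sum_congr rfl fun n _ => hxsq n]
      exact Summable.sum_le_tsum u (fun n _ => hX0 n) hXsumm
    · apply Real.sqrt_le_sqrt
      rw [Finset.sum_congr rfl fun n _ => hysq n]
      exact Summable.sum_le_tsum u (fun n _ => hY0 n) hsum
    · exact Real.sqrt_nonneg _
    · exact Real.sqrt_nonneg _
  have hnormfz : ‖f z‖ ≤ ∑' n, x n * y n := by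
    have hz' : HasSum (fun n : ℤ => a n * z ^ n) (f z) := ha z hz
    have hsn : Summable (fun n : ℤ => ‖a n * z ^ n‖) := by
      apply hsummxy.congr
      intro n
      rw [hxy n, norm_mul, norm_zpow]
    calc ‖f z‖ = ‖∑' n : ℤ, a n * z ^ n‖ := by rw [hz'.tsum_eq]
      _ ≤ ∑' n : ℤ, ‖a n * z ^ n‖ := norm_tsum_le_tsum_norm hsn
      _ = ∑' n, x n * y n := tsum_congr fun n => by rw [hxy n, norm_mul, norm_zpow]
  have hreal : ‖f z‖ ≤ 1 / Real.sqrt (2 * π) * Real.sqrt B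
      * Real.sqrt (∑' n : ℤ, ‖z‖ ^ (2 * n) / laurentI n r) := by
    have h3 : Real.sqrt (∑' n, X n) ≤ Real.sqrt B / Real.sqrt (2 * π) := by
      rw [← Real.sqrt_div hB0]
      exact Real.sqrt_le_sqrt htsumX
    calc ‖f z‖ ≤ ∑' n, x n * y n := hnormfz
      _ ≤ Real.sqrt (∑' n, X n) * Real.sqrt (∑' n : ℤ, ‖z‖ ^ (2 * n) / laurentI n r) := hCS
      _ ≤ (Real.sqrt B / Real.sqrt (2 * π))
            * Real.sqrt (∑' n : ℤ, ‖z‖ ^ (2 * n) / laurentI n r) :=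
          mul_le_mul_of_nonneg_right h3 (Real.sqrt_nonneg _)
      _ = 1 / Real.sqrt (2 * π) * Real.sqrt B
            * Real.sqrt (∑' n : ℤ, ‖z‖ ^ (2 * n) / laurentI n r) := by ring
  have hJB : J = ENNReal.ofReal B := (ENNReal.ofReal_toReal hJt).symm
  rw [hJB, ENNReal.ofReal_rpow_of_nonneg hB0 (by norm_num : (0:ℝ) ≤ 1/2)]
  rw [← Real.sqrt_eq_rpow]
  rw [← ENNReal.ofReal_mul (by positivity), ← ENNReal.ofReal_mul (by positivity)]
  exact ENNReal.ofReal_le_ofReal hreal
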